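/- The subalgebra S_2 of W_2, consisting of those commutative bilinear operators A on E_2 such that the operator T_a(x)=A(a,x) has trace zero for every a ∈ E_2, equals the span of ξ_1−ξ_5, ξ_2−ξ_6, ξ_3, ξ_4; in particular S_2 is 4-dimensional. -/
import Mathlib


section

variable (K : Type*) [Field K] [CharZero K]

/-- The 2-dimensional space `E₂`. -/
abbrev V2 := Fin 2 → K

/-- The basis `e 0, e 1` of `E₂`. -/
noncomputable def e (i : Fin 2) : V2 K := Pi.single i 1

/-- `W(2)`: the space of all bilinear maps on `E₂`. -/
abbrev W := V2 K →ₗ[K] V2 K →ₗ[K] V2 K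

/-- The basis elements `α_{ij}^k` of `W(2)`, `alpha i j k (e t) (e l) = δ_{it} δ_{jl} • e k`
(indices shifted to `0,1`). -/
noncomputable def alpha (i j k : Fin 2) : W K :=
  LinearMap.mk₂ K (fun x y => (x i * y j) • e K k)
    (fun x x' y => by simp [add_mul, add_smul])
    (fun c x y => by simp [smul_smul, mul_assoc])
    (fun x y y' => by simp [mul_add, add_smul])
    (fun c x y => by simp [smul_smul]; ring_nf)

/-- The multiplication of the conservative algebra `W(2)`:
`(A·B)(x,y) = A(e₁, B(x,y)) − B(A(e₁,x), y) − B(x, A(e₁,y))`. -/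
noncomputable def mulW (A B : W K) : W K :=
  LinearMap.mk₂ K
    (fun x y => A (e K 0) (B x y) - B (A (e K 0) x) y - B x (A (e K 0) y))
    (fun x x' y => by simp only [map_add, LinearMap.add_apply]; abel)
    (fun c x y => by simp only [map_smul, LinearMap.smul_apply, smul_sub])
    (fun x y y' => by simp only [map_add, LinearMap.add_apply]; abel)
    (fun c x y => by simp only [map_smul, LinearMap.smul_apply, smul_sub])

end

set_option maxSynthPendingDepth 3
set_option synthInstance.maxHeartbeats 1000000
set_option maxHeartbeats 1000000
set_option linter.unusedSectionVars false

section

variable (K : Type*) [Field K] [CharZero K]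

lemma alpha_apply (i j k : Fin 2) (x y : V2 K) : alpha K i j k x y = (x i * y j) • e K k := rfl

lemma e_apply (i j : Fin 2) : e K i j = if i = j then 1 else 0 := by
  simp [e, Pi.single_apply, eq_comm]

lemma trace_eq (T : V2 K →ₗ[K] V2 K) :
    LinearMap.trace K (V2 K) T = T (e K 0) 0 + T (e K 1) 1 := by
  rw [LinearMap.trace_eq_matrix_trace K (Pi.basisFun K (Fin 2))]
  simp [Matrix.trace, LinearMap.toMatrix_apply, e, Fin.sum_univ_two]

lemma ext2 (f g : W K) (h : ∀ i j, f (e K i) (e K j) = g (e K i) (e K j)) : f = g := by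
  apply (Pi.basisFun K (Fin 2)).ext; intro i
  apply (Pi.basisFun K (Fin 2)).ext; intro j
  simpa [e] using h i j

/-- The subalgebra `S₂` of `W₂`, consisting of the commutative bilinear operators
`A` on `E₂` such that `T_a : x ↦ A(a,x)` has trace zero for every `a`, equals the
span of `ξ₁−ξ₅, ξ₂−ξ₆, ξ₃, ξ₄`; in particular it is 4-dimensional. -/
theorem S2_description :
    {A : W K | (∀ x y : V2 K, A x y = A y x) ∧
        ∀ a : V2 K, LinearMap.trace K (V2 K) (A a) = 0}
      = ↑(Submodule.span K {alpha K 0 0 0 - (alpha K 0 1 1 + alpha K 1 0 1),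
          (alpha K 0 1 0 + alpha K 1 0 0) - alpha K 1 1 1,
          alpha K 1 1 0, alpha K 0 0 1}) ∧
    Module.finrank K (Submodule.span K {alpha K 0 0 0 - (alpha K 0 1 1 + alpha K 1 0 1),
          (alpha K 0 1 0 + alpha K 1 0 0) - alpha K 1 1 1,
          alpha K 1 1 0, alpha K 0 0 1} : Submodule K (W K)) = 4 := by
  constructor
  · ext A
    simp only [Set.mem_setOf_eq, SetLike.mem_coe]
    constructor
    · rintro ⟨hsym, htr⟩
      have h0 := htr (e K 0); rw [trace_eq] at h0
      have h1 := htr (e K 1); rw [trace_eq] at h1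
      have hs := hsym (e K 1) (e K 0)
      have hs0 : A (e K 1) (e K 0) 0 = A (e K 0) (e K 1) 0 := by rw [hs]
      have hs1 : A (e K 1) (e K 0) 1 = A (e K 0) (e K 1) 1 := by rw [hs]
      have hA : A = A (e K 0) (e K 0) 0 • (alpha K 0 0 0 - (alpha K 0 1 1 + alpha K 1 0 1))
          + A (e K 0) (e K 1) 0 • ((alpha K 0 1 0 + alpha K 1 0 0) - alpha K 1 1 1)
          + A (e K 1) (e K 1) 0 • alpha K 1 1 0 + A (e K 0) (e K 0) 1 • alpha K 0 0 1 := by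
        apply ext2
        intro i j
        funext t
        fin_cases i <;> fin_cases j <;> fin_cases t <;>
          simp only [LinearMap.add_apply, LinearMap.sub_apply,
            LinearMap.smul_apply, Pi.add_apply, Pi.sub_apply, Pi.smul_apply,
            alpha_apply, e_apply, smul_eq_mul, Fin.mk_zero, Fin.mk_one]
        all_goals norm_num
        · exact eq_neg_of_add_eq_zero_right h0
        · exact hs0
        · rw [hs1]; exact eq_neg_of_add_eq_zero_right h0
        · rw [← hs0]; exact eq_neg_of_add_eq_zero_right h1
      rw [hA]
      refine add_mem (add_mem (add_mem (Submodule.smul_mem _ _ ?_) (Submodule.smul_mem _ _ ?_))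
        (Submodule.smul_mem _ _ ?_)) (Submodule.smul_mem _ _ ?_) <;>
        exact Submodule.subset_span (by simp)
    · intro h
      induction h using Submodule.span_induction with
      | mem x hx =>
        rcases hx with rfl | rfl | rfl | rfl <;>
        refine ⟨fun x y => by
          funext t
          simp only [LinearMap.add_apply, LinearMap.sub_apply,
            Pi.add_apply, Pi.sub_apply, alpha_apply, Pi.smul_apply, e_apply, smul_eq_mul]
          ring, fun a => by
          rw [trace_eq]
          simp only [LinearMap.add_apply, LinearMap.sub_apply,
            Pi.add_apply, Pi.sub_apply, alpha_apply, Pi.smul_apply, e_apply, smul_eq_mul]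
          norm_num⟩
      | zero => exact ⟨fun x y => by simp, fun a => by simp⟩
      | add x y hx hy ihx ihy =>
        exact ⟨fun u w => by simp [ihx.1 u w, ihy.1 u w],
          fun a => by simp [ihx.2 a, ihy.2 a]⟩
      | smul c x hx ih =>
        exact ⟨fun u w => by simp [ih.1 u w], fun a => by simp [ih.2 a]⟩
  · have hli : LinearIndependent K ![alpha K 0 0 0 - (alpha K 0 1 1 + alpha K 1 0 1),
        (alpha K 0 1 0 + alpha K 1 0 0) - alpha K 1 1 1, alpha K 1 1 0, alpha K 0 0 1] := by
      rw [Fintype.linearIndependent_iff]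
      intro g hg
      have h := fun (a b : Fin 2) (t : Fin 2) =>
        congrFun (LinearMap.congr_fun (LinearMap.congr_fun hg (e K a)) (e K b)) t
      simp only [Fin.sum_univ_four, Matrix.cons_val_zero, Matrix.cons_val_one, Matrix.head_cons,
        Matrix.cons_val_two, Matrix.tail_cons, Matrix.cons_val_three, LinearMap.add_apply,
        LinearMap.sub_apply, LinearMap.smul_apply, Pi.add_apply, Pi.sub_apply, Pi.smul_apply,
        alpha_apply, e_apply, smul_eq_mul, LinearMap.zero_apply, Pi.zero_apply] at h
      have h000 := h 0 0 0
      have h001 := h 0 0 1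
      have h010 := h 0 1 0
      have h110 := h 1 1 0
      norm_num at h000 h001 h010 h110
      intro i
      fin_cases i <;> simp_all
    have hr : Set.range ![alpha K 0 0 0 - (alpha K 0 1 1 + alpha K 1 0 1),
        (alpha K 0 1 0 + alpha K 1 0 0) - alpha K 1 1 1, alpha K 1 1 0, alpha K 0 0 1]
        = {alpha K 0 0 0 - (alpha K 0 1 1 + alpha K 1 0 1),
          (alpha K 0 1 0 + alpha K 1 0 0) - alpha K 1 1 1,
          alpha K 1 1 0, alpha K 0 0 1} := by
      ext x
      constructor
      · rintro ⟨i, rfl⟩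
        fin_cases i <;> simp
      · rintro (rfl | rfl | rfl | rfl)
        · exact ⟨0, rfl⟩
        · exact ⟨1, rfl⟩
        · exact ⟨2, rfl⟩
        · exact ⟨3, rfl⟩
    rw [← hr, finrank_span_eq_card hli]
    simp

end
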